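/- arXiv:1303.3619 — 2 statements merged into one kernel-verified Lean document; each statement's English description precedes it below -/
import Mathlib

section
/- Let Tᵢ be the Demazure–Lusztig operator on ℚ(q,t)[x₁,…,xₙ] satisfying Tᵢ² = (t-1)Tᵢ + t, Tᵢ(xᵢ·TᵢF) = t·x_{i+1}F, and Tᵢ(g) = tg for any g symmetric in xᵢ,x_{i+1}. For Laurent polynomials F, G: if TᵢF = G, then both F + G and t·x_{i+1}F + xᵢG are symmetric in xᵢ and x_{i+1}. -/
/-- The Laurent monomial `x_a^e` in the ring of Laurent polynomials
`K[x₁^{±1},…,xₙ^{±1}]`, modeled as `AddMonoidAlgebra K (Fin n →₀ ℤ)`. -/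
noncomputable def LX (K : Type*) [Field K] (n : ℕ) (a : Fin n) (e : ℤ) :
    AddMonoidAlgebra K (Fin n →₀ ℤ) :=
  AddMonoidAlgebra.single (Finsupp.single a e) 1

/-- The algebra automorphism of `K[x₁^{±1},…,xₙ^{±1}]` exchanging the variables
`x_a` and `x_b`. -/
noncomputable def swapVars (K : Type*) [Field K] (n : ℕ) (a b : Fin n) :
    AddMonoidAlgebra K (Fin n →₀ ℤ) ≃ₐ[K] AddMonoidAlgebra K (Fin n →₀ ℤ) :=
  AddMonoidAlgebra.domCongr K K (Finsupp.domCongr (Equiv.swap a b))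

lemma one_sub_single_ne_zero (K : Type*) [Field K] (n : ℕ) (t : K)
    (μ : Fin n →₀ ℤ) (hμ : μ ≠ 0) :
    (1 : AddMonoidAlgebra K (Fin n →₀ ℤ)) - AddMonoidAlgebra.single μ t ≠ 0 := by
  intro h
  have h2 : ((1 : AddMonoidAlgebra K (Fin n →₀ ℤ)) - AddMonoidAlgebra.single μ t).coeff 0 = 0 := by
    rw [h]; rfl
  rw [AddMonoidAlgebra.coeff_sub, Finsupp.sub_apply] at h2
  simp [AddMonoidAlgebra.one_def, AddMonoidAlgebra.coeff_single, Finsupp.single_apply, hμ, Ne.symm hμ] at h2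

lemma algebraMap_mul_LX_LX (K : Type*) [Field K] (n : ℕ) (t : K) (a b : Fin n) :
    algebraMap K (AddMonoidAlgebra K (Fin n →₀ ℤ)) t * (LX K n a 1 * LX K n b (-1))
      = AddMonoidAlgebra.single (Finsupp.single a 1 + Finsupp.single b (-1)) t := by
  rw [show (algebraMap K (AddMonoidAlgebra K (Fin n →₀ ℤ)) t)
      = AddMonoidAlgebra.single 0 t from rfl]
  simp [LX, AddMonoidAlgebra.single_mul_single]

/-- Let `Tᵢ` be the Demazure–Lusztig operator on Laurent polynomials
over `ℚ(q,t)` (characterized by its defining formula, multiplied through by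
`1 - xᵢ/x_{i+1}`), satisfying `Tᵢ² = (t-1)Tᵢ + t`, `Tᵢ(xᵢ·TᵢF) = t x_{i+1} F`,
and `Tᵢ g = t g` for `g` symmetric in `xᵢ, x_{i+1}`.  If `TᵢF = G` then both
`F + G` and `t x_{i+1} F + xᵢ G` are symmetric in `xᵢ` and `x_{i+1}`. -/
theorem Ti_eq_implies_symmetric (K : Type*) [Field K] (q t : K)
    (n i : ℕ) (hi : i + 1 < n)
    (T : AddMonoidAlgebra K (Fin n →₀ ℤ) →ₗ[K] AddMonoidAlgebra K (Fin n →₀ ℤ))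
    (hT : ∀ f,
      (1 - LX K n ⟨i, Nat.lt_of_succ_lt hi⟩ 1 * LX K n ⟨i + 1, hi⟩ (-1)) * T f
        = t • ((1 - LX K n ⟨i, Nat.lt_of_succ_lt hi⟩ 1 * LX K n ⟨i + 1, hi⟩ (-1)) *
            swapVars K n ⟨i, Nat.lt_of_succ_lt hi⟩ ⟨i + 1, hi⟩ f)
          + (t - 1) • (f - swapVars K n ⟨i, Nat.lt_of_succ_lt hi⟩ ⟨i + 1, hi⟩ f))
    (hsq : ∀ f, T (T f) = (t - 1) • T f + t • f)
    (hXT : ∀ f, T (LX K n ⟨i, Nat.lt_of_succ_lt hi⟩ 1 * T f)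
      = t • (LX K n ⟨i + 1, hi⟩ 1 * f))
    (hsym : ∀ g, swapVars K n ⟨i, Nat.lt_of_succ_lt hi⟩ ⟨i + 1, hi⟩ g = g → T g = t • g)
    (F G : AddMonoidAlgebra K (Fin n →₀ ℤ)) (hFG : T F = G) :
    swapVars K n ⟨i, Nat.lt_of_succ_lt hi⟩ ⟨i + 1, hi⟩ (F + G) = F + G ∧
    swapVars K n ⟨i, Nat.lt_of_succ_lt hi⟩ ⟨i + 1, hi⟩
        (t • (LX K n ⟨i + 1, hi⟩ 1 * F) + LX K n ⟨i, Nat.lt_of_succ_lt hi⟩ 1 * G)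
      = t • (LX K n ⟨i + 1, hi⟩ 1 * F) + LX K n ⟨i, Nat.lt_of_succ_lt hi⟩ 1 * G := by
  set a : Fin n := ⟨i, Nat.lt_of_succ_lt hi⟩ with ha
  set b : Fin n := ⟨i + 1, hi⟩ with hb
  have hab : a ≠ b := by
    simp only [ha, hb, Ne, Fin.mk.injEq]; omega
  set s := swapVars K n a b with hs
  set u : AddMonoidAlgebra K (Fin n →₀ ℤ) := LX K n a 1 with hu
  set v : AddMonoidAlgebra K (Fin n →₀ ℤ) := LX K n b 1 with hv
  set w : AddMonoidAlgebra K (Fin n →₀ ℤ) := LX K n b (-1) with hw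
  set c : AddMonoidAlgebra K (Fin n →₀ ℤ) := algebraMap K _ t with hc
  have hsmul : ∀ x : AddMonoidAlgebra K (Fin n →₀ ℤ), t • x = c * x := fun x => Algebra.smul_def t x
  have hsmul' : ∀ x : AddMonoidAlgebra K (Fin n →₀ ℤ), (t - 1) • x = (c - 1) * x := by
    intro x
    rw [Algebra.smul_def, map_sub, map_one]
  have hwv : w * v = 1 := by
    simp [hw, hv, LX, AddMonoidAlgebra.single_mul_single]
    rfl
  have hsu : s u = v := by
    simp [hs, hu, hv, swapVars, LX, AddMonoidAlgebra.domCongr_single]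
  have hsv : s v = u := by
    simp [hs, hu, hv, swapVars, LX, AddMonoidAlgebra.domCongr_single,
      Equiv.swap_apply_right]
  -- hypotheses in multiplicative form
  have h1 : (1 - u * w) * G = c * ((1 - u * w) * s F) + (c - 1) * (F - s F) := by
    have := hT F
    rw [hFG] at this
    simp only [hsmul, hsmul'] at this
    exact this
  have hTG : T G = (c - 1) * G + c * F := by
    have := hsq F
    rw [hFG] at this
    simp only [hsmul, hsmul'] at this
    exact this
  have h2 : (1 - u * w) * ((c - 1) * G + c * F)
      = c * ((1 - u * w) * s G) + (c - 1) * (G - s G) := by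
    have := hT G
    rw [hTG] at this
    simp only [hsmul, hsmul'] at this
    exact this
  -- Part 1
  have hkey : (1 - c * (u * w)) * ((F + G) - (s F + s G)) = 0 := by
    linear_combination h1 + h2
  have hne : (1 - c * (u * w)) ≠ 0 := by
    have hcu : c * (u * w) = AddMonoidAlgebra.single
        (Finsupp.single a 1 + Finsupp.single b (-1)) t :=
      algebraMap_mul_LX_LX K n t a b
    have hμ : Finsupp.single a (1:ℤ) + Finsupp.single b (-1) ≠ 0 := by
      intro h
      have := DFunLike.congr_fun h a
      simp [Finsupp.single_apply, hab, Ne.symm hab] at this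
    rw [hcu]
    exact one_sub_single_ne_zero K n t _ hμ
  have hsum : s F + s G = F + G := by
    rcases mul_eq_zero.mp hkey with h | h
    · exact absurd h hne
    · exact (sub_eq_zero.mp h).symm
  constructor
  · rw [map_add]; exact hsum
  · -- Part 2
    have h3 : (1 - u * w) * (c * (v * F))
        = c * ((1 - u * w) * (v * s G)) + (c - 1) * (u * G - v * s G) := by
      have := hT (u * G)
      rw [← hFG, hXT F, hFG, map_mul, hsu] at this
      simp only [hsmul, hsmul'] at this
      exact this
    have h1' : (v - u) * G = c * ((v - u) * s F) + (c - 1) * (v * F - v * s F) := by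
      linear_combination v * h1 + (u * G - c * (u * s F)) * hwv
    rw [map_add, map_smul, map_mul, map_mul, hsu, hsv]
    rw [hsmul, hsmul]
    linear_combination v * hsum + h1'
end

section
/- Let Tᵢ be the Demazure–Lusztig operator Tᵢf = t(sᵢ·f) + (t-1)(f - sᵢ·f)/(1 - xᵢ/x_{i+1}) on Laurent polynomials over ℚ(q,t). If F + G and t·x_{i+1}F + xᵢG are both symmetric in xᵢ and x_{i+1}, then TᵢF = G. -/
/-- Let `Tᵢ` be the Demazure–Lusztig operator
`Tᵢ f = t(sᵢ·f) + (t-1)(f - sᵢ·f)/(1 - xᵢ/x_{i+1})` on Laurent polynomials over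
`ℚ(q,t)` (characterized by multiplying through by `1 - xᵢ/x_{i+1}`).  If `F + G`
and `t x_{i+1} F + xᵢ G` are both symmetric in `xᵢ` and `x_{i+1}`, then `TᵢF = G`. -/
theorem symmetric_implies_Ti_eq (K : Type*) [Field K] (q t : K)
    (n i : ℕ) (hi : i + 1 < n)
    (T : AddMonoidAlgebra K (Fin n →₀ ℤ) →ₗ[K] AddMonoidAlgebra K (Fin n →₀ ℤ))
    (hT : ∀ f,
      (1 - LX K n ⟨i, Nat.lt_of_succ_lt hi⟩ 1 * LX K n ⟨i + 1, hi⟩ (-1)) * T f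
        = t • ((1 - LX K n ⟨i, Nat.lt_of_succ_lt hi⟩ 1 * LX K n ⟨i + 1, hi⟩ (-1)) *
            swapVars K n ⟨i, Nat.lt_of_succ_lt hi⟩ ⟨i + 1, hi⟩ f)
          + (t - 1) • (f - swapVars K n ⟨i, Nat.lt_of_succ_lt hi⟩ ⟨i + 1, hi⟩ f))
    (F G : AddMonoidAlgebra K (Fin n →₀ ℤ))
    (h1 : swapVars K n ⟨i, Nat.lt_of_succ_lt hi⟩ ⟨i + 1, hi⟩ (F + G) = F + G)
    (h2 : swapVars K n ⟨i, Nat.lt_of_succ_lt hi⟩ ⟨i + 1, hi⟩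
        (t • (LX K n ⟨i + 1, hi⟩ 1 * F) + LX K n ⟨i, Nat.lt_of_succ_lt hi⟩ 1 * G)
      = t • (LX K n ⟨i + 1, hi⟩ 1 * F) + LX K n ⟨i, Nat.lt_of_succ_lt hi⟩ 1 * G) :
    T F = G := by
  set a : Fin n := ⟨i, Nat.lt_of_succ_lt hi⟩ with ha
  set b : Fin n := ⟨i + 1, hi⟩ with hb
  have hab : a ≠ b := by
    simp only [ha, hb, ne_eq, Fin.mk.injEq]; omega
  set s := swapVars K n a b with hs
  set x := LX K n a 1 with hx
  set y := LX K n b 1 with hy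
  set yinv := LX K n b (-1) with hyinv
  have hyy : yinv * y = 1 := by
    simp [hy, hyinv, LX, AddMonoidAlgebra.single_mul_single, AddMonoidAlgebra.one_def]
  have hsx : s x = y := by
    simp [hs, hx, hy, swapVars, LX]
  have hsy : s y = x := by
    simp [hs, hx, hy, swapVars, LX, Equiv.swap_apply_right]
  have hyne : y ≠ 0 := by
    simp [hy, LX]
  have hDne : (1 - x * yinv : AddMonoidAlgebra K (Fin n →₀ ℤ)) ≠ 0 := by
    have hxy : x * yinv = AddMonoidAlgebra.single
        (Finsupp.single a 1 + Finsupp.single b (-1)) (1 : K) := by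
      simp [hx, hyinv, LX, AddMonoidAlgebra.single_mul_single]
    have hmne : (Finsupp.single a (1:ℤ) + Finsupp.single b (-1)) ≠ 0 := by
      intro hz
      have h' := congrArg (fun p => p a) hz
      simp [Finsupp.single_apply, hab.symm] at h'
    intro h
    rw [hxy] at h
    have h' : (AddMonoidAlgebra.single (0 : Fin n →₀ ℤ) (1 : K))
        = AddMonoidAlgebra.single (Finsupp.single a 1 + Finsupp.single b (-1)) (1 : K) := by
      rw [← AddMonoidAlgebra.one_def]
      exact sub_eq_zero.mp h
    rcases AddMonoidAlgebra.single_inj.mp h' with ⟨h1', _⟩ | ⟨h1', _⟩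
    · exact hmne h1'.symm
    · exact one_ne_zero h1'
  have e1 : s F + s G = F + G := by rw [← map_add]; exact h1
  have e2 : t • (x * s F) + y * s G = t • (y * F) + x * G := by
    have h2' := h2
    rw [map_add, map_smul, map_mul, map_mul, hsy, hsx] at h2'
    exact h2'
  have hDy : y * (1 - x * yinv) = y - x := by
    have hc : y * (x * yinv) = x * (yinv * y) := by ring
    rw [mul_sub, mul_one, hc, hyy, mul_one]
  have key0 : (y - x) * G
      = algebraMap K _ t * ((y - x) * s F)
        + (algebraMap K _ t - 1) * (y * F - y * s F) := by
    simp only [Algebra.smul_def] at e1 e2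
    linear_combination (-y) * e1 + e2
  have key : y * ((1 - x * yinv) * G)
      = y * (t • ((1 - x * yinv) * s F) + (t - 1) • (F - s F)) := by
    simp only [Algebra.smul_def, map_sub, map_one]
    linear_combination (G - algebraMap K _ t * s F) * hDy + key0
  have key2 : (1 - x * yinv) * G
      = t • ((1 - x * yinv) * s F) + (t - 1) • (F - s F) := mul_left_cancel₀ hyne key
  have hTF := hT F
  rw [← key2] at hTF
  exact mul_left_cancel₀ hDne hTF
end
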